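/- Let z ∈ {0,1}^n, y, w ∈ ℝ^n satisfy w_i ≥ y_i for all i with z_i = 1 and w_i ≤ y_i for all i with z_i = 0. Let m = Σ z_i, and let i_1,...,i_m (resp. j_1,...,j_m) enumerate the treated indices {i : z_i = 1} in increasing order of r_{i_k}(y) (resp. r_{j_k}(w)), using ranks with 'first' tie-breaking. Then for every k ∈ {1,...,m}, r_{j_k}(w) ≥ r_{i_k}(y); that is, the k-th smallest treated rank under w is at least the k-th smallest treated rank under y. -/

import Mathlib

open Finset

/-- Rank with the "first" method for ties. -/
noncomputable def rankFirst (n : ℕ) (y : Fin n → ℝ) (i : Fin n) : ℕ :=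
  (Finset.univ.filter fun j => y j < y i).card +
  (Finset.univ.filter fun j => y j = y i ∧ j ≤ i).card

section Aux

variable {n : ℕ}

/-- lex-below relation induced by a vector `v`. -/
def bel (v : Fin n → ℝ) (i j : Fin n) : Prop := v i < v j ∨ (v i = v j ∧ i ≤ j)

noncomputable instance (v : Fin n → ℝ) : DecidableRel (bel v) := fun _ _ => by
  unfold bel; infer_instance

lemma bel_refl (v : Fin n → ℝ) (i : Fin n) : bel v i i := Or.inr ⟨rfl, le_refl i⟩

lemma bel_trans {v : Fin n → ℝ} {i j k : Fin n} (h1 : bel v i j) (h2 : bel v j k) :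
    bel v i k := by
  rcases h1 with h1 | ⟨h1, h1'⟩ <;> rcases h2 with h2 | ⟨h2, h2'⟩
  · exact Or.inl (h1.trans h2)
  · exact Or.inl (h2 ▸ h1)
  · exact Or.inl (h1 ▸ h2)
  · exact Or.inr ⟨h1.trans h2, h1'.trans h2'⟩

lemma bel_antisymm {v : Fin n → ℝ} {i j : Fin n} (h1 : bel v i j) (h2 : bel v j i) :
    i = j := by
  rcases h1 with h1 | ⟨h1, h1'⟩ <;> rcases h2 with h2 | ⟨h2, h2'⟩
  · exact absurd (h1.trans h2) (lt_irrefl _)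
  · exact absurd h1 (h2 ▸ lt_irrefl _)
  · exact absurd h2 (h1 ▸ lt_irrefl _)
  · exact le_antisymm h1' h2'

lemma bel_total (v : Fin n → ℝ) (i j : Fin n) : bel v i j ∨ bel v j i := by
  rcases lt_trichotomy (v i) (v j) with h | h | h
  · exact Or.inl (Or.inl h)
  · rcases le_total i j with h' | h'
    · exact Or.inl (Or.inr ⟨h, h'⟩)
    · exact Or.inr (Or.inr ⟨h.symm, h'⟩)
  · exact Or.inr (Or.inl h)

lemma rankFirst_eq (v : Fin n → ℝ) (i : Fin n) :
    rankFirst n v i = (Finset.univ.filter fun j => bel v j i).card := by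
  unfold rankFirst bel
  rw [filter_or, card_union_of_disjoint]
  rw [disjoint_left]
  rintro a ha hb
  simp only [mem_filter] at ha hb
  exact absurd hb.2.1 (ne_of_lt ha.2)

lemma rank_mono {v : Fin n → ℝ} {i j : Fin n} (h : bel v i j) :
    rankFirst n v i ≤ rankFirst n v j := by
  rw [rankFirst_eq, rankFirst_eq]
  apply card_le_card
  intro a ha
  simp only [mem_filter] at ha ⊢
  exact ⟨ha.1, bel_trans ha.2 h⟩

lemma rank_strict {v : Fin n → ℝ} {i j : Fin n} (h : bel v i j) (hne : i ≠ j) :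
    rankFirst n v i < rankFirst n v j := by
  rw [rankFirst_eq, rankFirst_eq]
  apply card_lt_card
  constructor
  · intro a ha
    simp only [mem_filter] at ha ⊢
    exact ⟨ha.1, bel_trans ha.2 h⟩
  · intro hsub
    have hj : j ∈ Finset.univ.filter fun a => bel v a j :=
      mem_filter.2 ⟨mem_univ j, bel_refl v j⟩
    have := hsub hj
    simp only [mem_filter] at this
    exact hne (bel_antisymm h this.2)

lemma rank_reflect {v : Fin n → ℝ} {i j : Fin n} (h : rankFirst n v i ≤ rankFirst n v j) :
    bel v i j := by
  by_contra hb
  rcases bel_total v j i with hji | hij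
  · have hne : j ≠ i := by rintro rfl; exact hb (bel_refl v _)
    exact absurd h (not_le.2 (rank_strict hji hne))
  · exact hb hij

lemma rank_inj (v : Fin n → ℝ) : Function.Injective (rankFirst n v) := by
  intro i j h
  exact bel_antisymm (rank_reflect h.le) (rank_reflect h.ge)

end Aux


section Aux2

variable {n : ℕ}

/-- number of control units lex-below `i` under `v`. -/
noncomputable def cS (z v : Fin n → ℝ) (i : Fin n) : ℕ :=
  (Finset.univ.filter fun j => z j = 0 ∧ bel v j i).card

/-- number of treated units lex-below `i` under `v`. -/
noncomputable def tS (z v : Fin n → ℝ) (i : Fin n) : ℕ :=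
  (Finset.univ.filter fun j => z j = 1 ∧ bel v j i).card

lemma rank_split (z v : Fin n → ℝ) (hz : ∀ i, z i = 0 ∨ z i = 1) (i : Fin n) :
    rankFirst n v i = tS z v i + cS z v i := by
  rw [rankFirst_eq, tS, cS, ← card_union_of_disjoint]
  · congr 1
    ext a
    simp only [mem_filter, mem_union, mem_univ, true_and]
    constructor
    · intro h
      rcases hz a with h0 | h1
      · exact Or.inr ⟨h0, h⟩
      · exact Or.inl ⟨h1, h⟩
    · rintro (⟨_, h⟩ | ⟨_, h⟩) <;> exact h
  · rw [disjoint_left]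
    rintro a ha hb
    simp only [mem_filter] at ha hb
    rw [ha.2.1] at hb
    norm_num at hb

lemma cS_mono {z v : Fin n → ℝ} {i i' : Fin n} (h : bel v i i') : cS z v i ≤ cS z v i' := by
  apply card_le_card
  intro a ha
  simp only [mem_filter] at ha ⊢
  exact ⟨ha.1, ha.2.1, bel_trans ha.2.2 h⟩

lemma cS_yw {z y w : Fin n → ℝ} {i : Fin n}
    (hw1 : ∀ i, z i = 1 → y i ≤ w i) (hw0 : ∀ i, z i = 0 → w i ≤ y i)
    (hzi : z i = 1) : cS z y i ≤ cS z w i := by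
  apply card_le_card
  intro a ha
  simp only [mem_filter] at ha ⊢
  refine ⟨ha.1, ha.2.1, ?_⟩
  have hwa : w a ≤ y a := hw0 a ha.2.1
  have hyi : y i ≤ w i := hw1 i hzi
  rcases ha.2.2 with h | ⟨h, h'⟩
  · exact Or.inl (lt_of_le_of_lt hwa (lt_of_lt_of_le h hyi))
  · have hle : w a ≤ w i := le_trans hwa (le_trans h.le hyi)
    rcases lt_or_eq_of_le hle with hlt | heq
    · exact Or.inl hlt
    · exact Or.inr ⟨heq, h'⟩

end Aux2

/-- if treated outcomes weakly increase and control outcomes weakly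
decrease, then each sorted treated rank weakly increases. -/
theorem stmt5 (n : ℕ) (z y w : Fin n → ℝ) (hz : ∀ i, z i = 0 ∨ z i = 1)
    (hw1 : ∀ i, z i = 1 → y i ≤ w i) (hw0 : ∀ i, z i = 0 → w i ≤ y i) :
    ∀ k < (Finset.univ.filter fun i => z i = 1).card,
      (Finset.sort
          (((Finset.univ.filter fun i => z i = 1)).image (rankFirst n y)) (· ≤ ·)).getD k 0
        ≤ (Finset.sort
          (((Finset.univ.filter fun i => z i = 1)).image (rankFirst n w)) (· ≤ ·)).getD k 0 := by
  classical
  intro k hk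
  set T := Finset.univ.filter fun i => z i = 1 with hT
  have hIy : (T.image (rankFirst n y)).card = T.card :=
    card_image_of_injective _ (rank_inj y)
  have hIw : (T.image (rankFirst n w)).card = T.card :=
    card_image_of_injective _ (rank_inj w)
  set Iy := T.image (rankFirst n y) with hIydef
  set Iw := T.image (rankFirst n w) with hIwdef
  set κ : Fin T.card := ⟨k, hk⟩ with hκ
  have hky : k < (Finset.sort Iy (· ≤ ·)).length := by rw [length_sort, hIy]; exact hk
  have hkw : k < (Finset.sort Iw (· ≤ ·)).length := by rw [length_sort, hIw]; exact hk
  rw [List.getD_eq_getElem _ _ hky, List.getD_eq_getElem _ _ hkw]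
  have e1 : Iy.orderEmbOfFin hIy κ = (Finset.sort Iy (· ≤ ·))[k]'hky := by
    rw [orderEmbOfFin_apply]; simp [Fin.getElem_fin]; rfl
  have e2 : Iw.orderEmbOfFin hIw κ = (Finset.sort Iw (· ≤ ·))[k]'hkw := by
    rw [orderEmbOfFin_apply]; simp [Fin.getElem_fin]; rfl
  rw [← e1, ← e2]
  obtain ⟨ik, hikT, hika⟩ := mem_image.1 (orderEmbOfFin_mem Iy hIy κ)
  obtain ⟨jk, hjkT, hjkb⟩ := mem_image.1 (orderEmbOfFin_mem Iw hIw κ)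
  have hikz : z ik = 1 := (mem_filter.1 hikT).2
  have hjkz : z jk = 1 := (mem_filter.1 hjkT).2
  -- (3) at most k+1 treated units are lex-below ik under y
  have htSy : tS z y ik ≤ k + 1 := by
    have h1 : ((Finset.univ.filter fun j => z j = 1 ∧ bel y j ik)).image (rankFirst n y)
        ⊆ Iy.filter (· ≤ Iy.orderEmbOfFin hIy κ) := by
      intro x hx
      obtain ⟨a, ha, rfl⟩ := mem_image.1 hx
      simp only [mem_filter, mem_univ, true_and] at ha
      refine mem_filter.2 ⟨mem_image_of_mem _ (mem_filter.2 ⟨mem_univ a, ha.1⟩), ?_⟩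
      rw [← hika]
      exact rank_mono ha.2
    have h2 : Iy.filter (· ≤ Iy.orderEmbOfFin hIy κ)
        ⊆ (Finset.Iic κ).image (Iy.orderEmbOfFin hIy) := by
      intro x hx
      obtain ⟨hx1, hx2⟩ := mem_filter.1 hx
      have : x ∈ Set.range (Iy.orderEmbOfFin hIy) := by
        rw [range_orderEmbOfFin]; exact hx1
      obtain ⟨l, rfl⟩ := this
      exact mem_image_of_mem _ (Finset.mem_Iic.2 ((Iy.orderEmbOfFin hIy).le_iff_le.1 hx2))
    calc tS z y ik
        = (((Finset.univ.filter fun j => z j = 1 ∧ bel y j ik)).image (rankFirst n y)).card :=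
          (card_image_of_injective _ (rank_inj y)).symm
      _ ≤ (Iy.filter (· ≤ Iy.orderEmbOfFin hIy κ)).card := card_le_card h1
      _ ≤ ((Finset.Iic κ).image (Iy.orderEmbOfFin hIy)).card := card_le_card h2
      _ ≤ (Finset.Iic κ).card := card_image_le
      _ = k + 1 := by rw [Fin.card_Iic]
  -- (4) at least k+1 treated units are lex-below jk under w
  have htSw : k + 1 ≤ tS z w jk := by
    have hmem : ∀ l : Fin T.card, ∃ a, a ∈ T ∧ rankFirst n w a = Iw.orderEmbOfFin hIw l := by
      intro l
      obtain ⟨a, ha, hb⟩ := mem_image.1 (orderEmbOfFin_mem Iw hIw l)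
      exact ⟨a, ha, hb⟩
    choose f hfT hfr using hmem
    have : (Finset.Iic κ).card ≤ (Finset.univ.filter fun j => z j = 1 ∧ bel w j jk).card := by
      apply Finset.card_le_card_of_injOn f
      · intro l hl
        have hlκ : l ≤ κ := Finset.mem_Iic.1 hl
        refine mem_filter.2 ⟨mem_univ _, (mem_filter.1 (hfT l)).2, ?_⟩
        apply rank_reflect
        rw [hfr l, hjkb]
        exact (Iw.orderEmbOfFin hIw).monotone hlκ
      · intro l _ l' _ hll
        have : Iw.orderEmbOfFin hIw l = Iw.orderEmbOfFin hIw l' := by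
          rw [← hfr l, ← hfr l', hll]
        exact (Iw.orderEmbOfFin hIw).injective this
    rw [Fin.card_Iic] at this
    exact this
  -- (5) find x treated, lex-below jk under w, with ik lex-below x under y
  have hikmem : ik ∈ Finset.univ.filter fun j => z j = 1 ∧ bel y j ik :=
    mem_filter.2 ⟨mem_univ _, hikz, bel_refl y ik⟩
  have hcardA : ((Finset.univ.filter fun j => z j = 1 ∧ bel y j ik).erase ik).card ≤ k := by
    rw [card_erase_of_mem hikmem]
    have : tS z y ik - 1 ≤ k + 1 - 1 := Nat.sub_le_sub_right htSy 1
    simpa [tS] using this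
  have hnotsub : ¬ ((Finset.univ.filter fun j => z j = 1 ∧ bel w j jk)
      ⊆ (Finset.univ.filter fun j => z j = 1 ∧ bel y j ik).erase ik) := by
    intro hsub
    have := card_le_card hsub
    have h2 : k + 1 ≤ k := le_trans htSw (le_trans this hcardA)
    omega
  obtain ⟨x, hxB, hxA⟩ := Set.not_subset.1 (fun h => hnotsub fun a ha => h ha)
  obtain ⟨_, hxz, hxw⟩ := mem_filter.1 hxB
  have hikx : bel y ik x := by
    by_cases hxik : x = ik
    · rw [hxik]; exact bel_refl y ik
    · rcases bel_total y ik x with h | h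
      · exact h
      · exfalso
        exact hxA (Finset.mem_erase.2 ⟨hxik, mem_filter.2 ⟨mem_univ _, hxz, h⟩⟩)
  -- final chain
  calc Iy.orderEmbOfFin hIy κ = rankFirst n y ik := hika.symm
    _ = tS z y ik + cS z y ik := rank_split z y hz ik
    _ ≤ (k + 1) + cS z y ik := by omega
    _ ≤ (k + 1) + cS z y x := by have := cS_mono (z := z) hikx; omega
    _ ≤ (k + 1) + cS z w x := by have := cS_yw hw1 hw0 hxz; omega
    _ ≤ (k + 1) + cS z w jk := by have := cS_mono (z := z) hxw; omega
    _ ≤ tS z w jk + cS z w jk := by omega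
    _ = rankFirst n w jk := (rank_split z w hz jk).symm
    _ = Iw.orderEmbOfFin hIw κ := hjkb
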